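/- arXiv:1208.1787 — 2 statements merged into one kernel-verified Lean document; each statement's English description precedes it below -/
import Mathlib

section
/- Let $A=k[z_1,\dots,z_n]$, $R=A[x,y]/(xy)$. The quotient of $\Omega_{R/k}$ by its torsion submodule is isomorphic to $A[x]\,dx\oplus A[y]\,dy\oplus\bigoplus_{i=1}^n R\,dz_i$, where $\Omega_{R/k}=(R\,dx\oplus R\,dy\oplus\bigoplus_i R\,dz_i)/(x\,dy+y\,dx)$, and the torsion submodule is generated by the class of $x\,dy$. -/
set_option synthInstance.maxHeartbeats 1000000
set_option maxHeartbeats 1600000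

open MvPolynomial

/-- `R = k[z_1,…,z_n][x,y]/(xy)`, the coordinate ring of a simple normal crossing
(nodal) hypersurface. -/
noncomputable abbrev NodalRing (k : Type*) [Field k] (n : ℕ) :=
  MvPolynomial (Fin n ⊕ Bool) k ⧸
    (Ideal.span {(X (Sum.inr true) * X (Sum.inr false) : MvPolynomial (Fin n ⊕ Bool) k)})

/-- The embedding of `k[z_1,…,z_n][x,y]` into the normalization `A[x] × A[y]`
(`A = k[z_1,…,z_n]`): `z_i ↦ (z_i,z_i)`, `x ↦ (x,0)`, `y ↦ (0,y)`. -/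
noncomputable def nodalToNormalization (k : Type*) [Field k] (n : ℕ) :
    MvPolynomial (Fin n ⊕ Bool) k →ₐ[k]
      Polynomial (MvPolynomial (Fin n) k) × Polynomial (MvPolynomial (Fin n) k) :=
  aeval (fun i => match i with
    | Sum.inl j => (Polynomial.C (X j), Polynomial.C (X j))
    | Sum.inr true => (Polynomial.X, 0)
    | Sum.inr false => (0, Polynomial.X))

/-- The induced embedding `R = A[x,y]/(xy) → A[x] × A[y]` of the nodal ring into its
normalization. -/
noncomputable def nodalRingToNormalization (k : Type*) [Field k] (n : ℕ) :
    NodalRing k n →ₐ[k]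
      Polynomial (MvPolynomial (Fin n) k) × Polynomial (MvPolynomial (Fin n) k) :=
  Ideal.Quotient.liftₐ _ (nodalToNormalization k n) (by
    intro a ha
    rw [Ideal.mem_span_singleton] at ha
    obtain ⟨c, rfl⟩ := ha
    rw [map_mul, map_mul]
    have hx : nodalToNormalization k n (X (Sum.inr true)) = (Polynomial.X, 0) := by
      simp [nodalToNormalization]
    have hy : nodalToNormalization k n (X (Sum.inr false)) = (0, Polynomial.X) := by
      simp [nodalToNormalization]
    rw [hx, hy]
    rw [show ((Polynomial.X, 0) * (0, Polynomial.X) :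
        Polynomial (MvPolynomial (Fin n) k) × Polynomial (MvPolynomial (Fin n) k)) = 0 by
      ext <;> simp]
    rw [zero_mul])

section Aux

variable (k : Type*) [Field k] (n : ℕ)

local notation "P" => MvPolynomial (Fin n ⊕ Bool) k
local notation "A" => MvPolynomial (Fin n) k
local notation "Nor" => (Polynomial (MvPolynomial (Fin n) k) × Polynomial (MvPolynomial (Fin n) k))
local notation "𝓘" => (Ideal.span {(X (Sum.inr true) * X (Sum.inr false) : MvPolynomial (Fin n ⊕ Bool) k)})
local notation "mkR" => Ideal.Quotient.mk (Ideal.span {(X (Sum.inr true) * X (Sum.inr false) : MvPolynomial (Fin n ⊕ Bool) k)})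
local notation "ψ" => nodalRingToNormalization k n

theorem psi_mk (f : P) : ψ (mkR f) = nodalToNormalization k n f := rfl

theorem nodal_pderiv_mem (i : Fin n) : ∀ a ∈ (𝓘).restrictScalars k,
    (pderiv (Sum.inl i)).toLinearMap.restrictScalars k a ∈ (𝓘).restrictScalars k := by
  intro a ha
  rw [Submodule.restrictScalars_mem, Ideal.mem_span_singleton] at ha ⊢
  obtain ⟨c, rfl⟩ := ha
  simp only [LinearMap.coe_restrictScalars, Derivation.coeFn_coe]
  rw [Derivation.leibniz]
  have : (pderiv (Sum.inl i)) ((X (Sum.inr true) * X (Sum.inr false) : P)) = 0 := by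
    rw [Derivation.leibniz, pderiv_X_of_ne (by simp), pderiv_X_of_ne (by simp)]
    simp
  rw [this]
  simp [Dvd.intro, mul_comm]

/-- partial derivative with respect to `z i`, descended to the nodal ring. -/
noncomputable def nodalPderiv (i : Fin n) : NodalRing k n →ₗ[k] NodalRing k n :=
  ((Submodule.Quotient.restrictScalarsEquiv k (𝓘)).toLinearMap.comp
    (Submodule.mapQ _ _ ((pderiv (Sum.inl i)).toLinearMap.restrictScalars k)
      (nodal_pderiv_mem k n i))).comp
    (Submodule.Quotient.restrictScalarsEquiv k (𝓘)).symm.toLinearMap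

theorem nodalPderiv_mk (i : Fin n) (f : P) :
    nodalPderiv k n i (mkR f) = mkR (pderiv (Sum.inl i) f) := rfl

noncomputable instance norModule : Module (NodalRing k n) Nor :=
  Module.compHom _ (nodalRingToNormalization k n).toRingHom

theorem nor_smul_def (r : NodalRing k n) (m : Nor) : r • m = ψ r * m := rfl

noncomputable instance norTower : IsScalarTower k (NodalRing k n) Nor := by
  constructor
  intro c r m
  rw [nor_smul_def, nor_smul_def, map_smul, Algebra.smul_mul_assoc]

/-- first component of the derivation: `Polynomial.derivative` after embedding into the
normalization. -/
noncomputable def nodalD1 : NodalRing k n →ₗ[k] Nor :=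
  (((Polynomial.derivative (R := A)).restrictScalars k).prodMap
    ((Polynomial.derivative (R := A)).restrictScalars k)).comp
    (nodalRingToNormalization k n).toLinearMap

theorem nodalD1_apply (r : NodalRing k n) :
    nodalD1 k n r = (Polynomial.derivative (ψ r).1, Polynomial.derivative (ψ r).2) := rfl

/-- The derivation from the nodal ring into its differentials model. -/
noncomputable def nodalDer :
    Derivation k (NodalRing k n) (Nor × (Fin n → NodalRing k n)) where
  toLinearMap := (nodalD1 k n).prod (LinearMap.pi fun i => nodalPderiv k n i)
  map_one_eq_zero' := by
    refine Prod.ext ?_ (funext fun i => ?_)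
    · show nodalD1 k n 1 = 0
      rw [nodalD1_apply, map_one]
      refine Prod.ext ?_ ?_ <;> simp
    · show nodalPderiv k n i 1 = 0
      have h1 : (1 : NodalRing k n) = mkR 1 := rfl
      rw [h1, nodalPderiv_mk]; simp
  leibniz' := by
    intro a b
    obtain ⟨f, rfl⟩ := Ideal.Quotient.mk_surjective a
    obtain ⟨g, rfl⟩ := Ideal.Quotient.mk_surjective b
    have key1 : (nodalD1 k n) (mkR f * mkR g)
        = mkR f • nodalD1 k n (mkR g) + mkR g • nodalD1 k n (mkR f) := by
      rw [nodalD1_apply, nodalD1_apply, nodalD1_apply, nor_smul_def, nor_smul_def, map_mul]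
      refine Prod.ext ?_ ?_ <;>
        simp [Polynomial.derivative_mul, Prod.fst_mul, Prod.snd_mul] <;> ring
    have key2 : ∀ i, nodalPderiv k n i (mkR f * mkR g)
        = mkR f * nodalPderiv k n i (mkR g) + mkR g * nodalPderiv k n i (mkR f) := by
      intro i
      rw [← map_mul, nodalPderiv_mk, nodalPderiv_mk, nodalPderiv_mk, Derivation.leibniz,
        map_add]
      simp [smul_eq_mul, map_mul]
    exact Prod.ext key1 (funext fun i => key2 i)

end Aux

section Aux2

variable (k : Type*) [Field k] (n : ℕ)

local notation "P" => MvPolynomial (Fin n ⊕ Bool) k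
local notation "A" => MvPolynomial (Fin n) k
local notation "mkR" => Ideal.Quotient.mk (Ideal.span {(X (Sum.inr true) * X (Sum.inr false) : MvPolynomial (Fin n ⊕ Bool) k)})
local notation "ψ" => nodalRingToNormalization k n

/-- the section `A[x] → P` of the first projection. -/
noncomputable def sectX : Polynomial (MvPolynomial (Fin n) k) →+* P :=
  Polynomial.eval₂RingHom
    ((MvPolynomial.aeval (fun j => X (Sum.inl j) : Fin n → P)).toRingHom) (X (Sum.inr true))

noncomputable def sectY : Polynomial (MvPolynomial (Fin n) k) →+* P :=
  Polynomial.eval₂RingHom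
    ((MvPolynomial.aeval (fun j => X (Sum.inl j) : Fin n → P)).toRingHom) (X (Sum.inr false))

theorem psi_sectX (p : Polynomial (MvPolynomial (Fin n) k)) :
    (nodalToNormalization k n (sectX k n p)).1 = p := by
  have : ((RingHom.fst (Polynomial (MvPolynomial (Fin n) k)) (Polynomial (MvPolynomial (Fin n) k))).comp
      ((nodalToNormalization k n).toRingHom.comp (sectX k n))) = RingHom.id _ := by
    apply Polynomial.ringHom_ext'
    · apply MvPolynomial.ringHom_ext
      · intro a
        simp [sectX, nodalToNormalization]
      · intro j
        simp [sectX, nodalToNormalization]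
    · simp [sectX, nodalToNormalization]
  exact RingHom.congr_fun this p

theorem psi_sectY (p : Polynomial (MvPolynomial (Fin n) k)) :
    (nodalToNormalization k n (sectY k n p)).2 = p := by
  have : ((RingHom.snd (Polynomial (MvPolynomial (Fin n) k)) (Polynomial (MvPolynomial (Fin n) k))).comp
      ((nodalToNormalization k n).toRingHom.comp (sectY k n))) = RingHom.id _ := by
    apply Polynomial.ringHom_ext'
    · apply MvPolynomial.ringHom_ext
      · intro a
        simp [sectY, nodalToNormalization]
      · intro j
        simp [sectY, nodalToNormalization]
    · simp [sectY, nodalToNormalization]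
  exact RingHom.congr_fun this p

theorem mk_sectX (f : P) :
    Ideal.Quotient.mk (Ideal.span {(X (Sum.inr false) : P)})
        (sectX k n ((nodalToNormalization k n f).1))
      = Ideal.Quotient.mk (Ideal.span {(X (Sum.inr false) : P)}) f := by
  have : ((Ideal.Quotient.mk (Ideal.span {(X (Sum.inr false) : P)})).comp
        ((sectX k n).comp ((RingHom.fst _ _).comp (nodalToNormalization k n).toRingHom)))
      = (Ideal.Quotient.mk (Ideal.span {(X (Sum.inr false) : P)})) := by
    apply MvPolynomial.ringHom_ext
    · intro a
      simp [sectX, nodalToNormalization]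
    · rintro (j | b)
      · simp [sectX, nodalToNormalization]
      · cases b
        · simp [sectX, nodalToNormalization]
        · simp [sectX, nodalToNormalization]
  exact RingHom.congr_fun this f

theorem mk_sectY (f : P) :
    Ideal.Quotient.mk (Ideal.span {(X (Sum.inr true) : P)})
        (sectY k n ((nodalToNormalization k n f).2))
      = Ideal.Quotient.mk (Ideal.span {(X (Sum.inr true) : P)}) f := by
  have : ((Ideal.Quotient.mk (Ideal.span {(X (Sum.inr true) : P)})).comp
        ((sectY k n).comp ((RingHom.snd _ _).comp (nodalToNormalization k n).toRingHom)))
      = (Ideal.Quotient.mk (Ideal.span {(X (Sum.inr true) : P)})) := by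
    apply MvPolynomial.ringHom_ext
    · intro a
      simp [sectY, nodalToNormalization]
    · rintro (j | b)
      · simp [sectY, nodalToNormalization]
      · cases b
        · simp [sectY, nodalToNormalization]
        · simp [sectY, nodalToNormalization]
  exact RingHom.congr_fun this f

theorem psi_mk' (f : P) : nodalRingToNormalization k n (mkR f) = nodalToNormalization k n f := rfl

theorem psi_x : ψ (mkR (X (Sum.inr true))) = (Polynomial.X, 0) := by
  rw [psi_mk']; simp [nodalToNormalization]

theorem psi_y : ψ (mkR (X (Sum.inr false))) = (0, Polynomial.X) := by
  rw [psi_mk']; simp [nodalToNormalization]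

theorem kerX (r : NodalRing k n) (h : (ψ r).1 = 0) :
    ∃ s, r = mkR (X (Sum.inr false)) * s := by
  obtain ⟨f, rfl⟩ := Ideal.Quotient.mk_surjective r
  rw [psi_mk'] at h
  have h2 := mk_sectX k n f
  rw [h, map_zero, map_zero] at h2
  have h3 : f ∈ Ideal.span {(X (Sum.inr false) : P)} :=
    Ideal.Quotient.eq_zero_iff_mem.1 h2.symm
  obtain ⟨c, rfl⟩ := Ideal.mem_span_singleton.1 h3
  exact ⟨mkR c, by rw [← map_mul]⟩

theorem kerY (r : NodalRing k n) (h : (ψ r).2 = 0) :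
    ∃ s, r = mkR (X (Sum.inr true)) * s := by
  obtain ⟨f, rfl⟩ := Ideal.Quotient.mk_surjective r
  rw [psi_mk'] at h
  have h2 := mk_sectY k n f
  rw [h, map_zero, map_zero] at h2
  have h3 : f ∈ Ideal.span {(X (Sum.inr true) : P)} :=
    Ideal.Quotient.eq_zero_iff_mem.1 h2.symm
  obtain ⟨c, rfl⟩ := Ideal.mem_span_singleton.1 h3
  exact ⟨mkR c, by rw [← map_mul]⟩

theorem xy_zero : mkR (X (Sum.inr true)) * mkR (X (Sum.inr false)) = 0 := by
  rw [← map_mul]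
  exact Ideal.Quotient.eq_zero_iff_mem.2 (Ideal.subset_span rfl)

theorem psi_injective : Function.Injective ψ := by
  rw [injective_iff_map_eq_zero]
  intro r hr
  obtain ⟨s, rfl⟩ := kerX k n r (by rw [hr]; rfl)
  have h2 : (ψ s).2 = 0 := by
    have := congrArg Prod.snd hr
    rw [map_mul, psi_y] at this
    simpa using this
  obtain ⟨u, rfl⟩ := kerY k n s h2
  rw [← mul_assoc, mul_comm (mkR (X (Sum.inr false))), xy_zero, zero_mul]

theorem x_ne_zero : (mkR (X (Sum.inr true)) : NodalRing k n) ≠ 0 := by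
  intro h
  have h2 := congrArg (fun r => (ψ r).1) h
  rw [psi_x k n] at h2
  rw [map_zero] at h2
  exact Polynomial.X_ne_zero h2

theorem y_ne_zero : (mkR (X (Sum.inr false)) : NodalRing k n) ≠ 0 := by
  intro h
  have h2 := congrArg (fun r => (ψ r).2) h
  rw [psi_y k n] at h2
  rw [map_zero] at h2
  exact Polynomial.X_ne_zero h2

theorem xy_nzd : (mkR (X (Sum.inr true)) + mkR (X (Sum.inr false)) : NodalRing k n)
    ∈ nonZeroDivisors (NodalRing k n) := by
  rw [mem_nonZeroDivisors_iff_right]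
  intro r hr
  apply psi_injective k n
  rw [map_zero]
  have := congrArg ψ hr
  rw [map_mul, map_add, psi_x, psi_y, map_zero] at this
  have h1 := congrArg Prod.fst this
  have h2 := congrArg Prod.snd this
  simp only [Prod.fst_mul, Prod.snd_mul, Prod.fst_add, Prod.snd_add, Prod.fst_zero,
    Prod.snd_zero, add_zero, zero_add] at h1 h2
  refine Prod.ext ?_ ?_
  · simpa using (mul_eq_zero.1 h1).resolve_right Polynomial.X_ne_zero
  · simpa using (mul_eq_zero.1 h2).resolve_right Polynomial.X_ne_zero

end Aux2

section Aux3

variable (k : Type*) [Field k] (n : ℕ)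

local notation "P" => MvPolynomial (Fin n ⊕ Bool) k
local notation "A" => MvPolynomial (Fin n) k
local notation "Nor" => (Polynomial (MvPolynomial (Fin n) k) × Polynomial (MvPolynomial (Fin n) k))
local notation "mkR" => Ideal.Quotient.mk (Ideal.span {(X (Sum.inr true) * X (Sum.inr false) : MvPolynomial (Fin n ⊕ Bool) k)})
local notation "ψ" => nodalRingToNormalization k n
local notation "M" => ((Polynomial (MvPolynomial (Fin n) k) × Polynomial (MvPolynomial (Fin n) k)) × (Fin n → NodalRing k n))

theorem psi_z (j : Fin n) : ψ (mkR (X (Sum.inl j)))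
    = (Polynomial.C (X j), Polynomial.C (X j)) := by
  rw [psi_mk]; simp [nodalToNormalization]

theorem der_x : nodalDer k n (mkR (X (Sum.inr true))) = (((1 : Polynomial A), (0 : Polynomial A)), (0 : Fin n → NodalRing k n)) := by
  refine Prod.ext ?_ (funext fun i => ?_)
  · show nodalD1 k n _ = _
    rw [nodalD1_apply, psi_x k n]
    refine Prod.ext ?_ ?_ <;> simp
  · show nodalPderiv k n i (mkR (X (Sum.inr true))) = (0 : Fin n → NodalRing k n) i
    rw [nodalPderiv_mk, pderiv_X_of_ne (by simp)]
    simp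

theorem der_y : nodalDer k n (mkR (X (Sum.inr false))) = (((0 : Polynomial A), (1 : Polynomial A)), (0 : Fin n → NodalRing k n)) := by
  refine Prod.ext ?_ (funext fun i => ?_)
  · show nodalD1 k n _ = _
    rw [nodalD1_apply, psi_y k n]
    refine Prod.ext ?_ ?_ <;> simp
  · show nodalPderiv k n i (mkR (X (Sum.inr false))) = (0 : Fin n → NodalRing k n) i
    rw [nodalPderiv_mk, pderiv_X_of_ne (by simp)]
    simp

theorem der_z (j : Fin n) : nodalDer k n (mkR (X (Sum.inl j)))
    = (((0 : Polynomial A), (0 : Polynomial A)), Pi.single j (1 : NodalRing k n)) := by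
  refine Prod.ext ?_ (funext fun i => ?_)
  · show nodalD1 k n _ = _
    rw [nodalD1_apply, psi_z k n]
    refine Prod.ext ?_ ?_ <;> simp
  · show nodalPderiv k n i (mkR (X (Sum.inl j)))
        = (Pi.single j (1 : NodalRing k n) : Fin n → NodalRing k n) i
    rw [nodalPderiv_mk, pderiv_X]
    by_cases h : i = j
    · subst h; simp
    · simp [Pi.single_apply, h, Ne.symm h]

/-- every differential form is a combination of the `d` of the variables. -/
theorem nodal_repr (ω : Ω[NodalRing k n⁄k]) :
    ∃ c : (Fin n ⊕ Bool) → NodalRing k n,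
      ∑ w, c w • KaehlerDifferential.D k (NodalRing k n) (mkR (X w)) = ω := by
  refine (Submodule.mem_span_range_iff_exists_fun (NodalRing k n)
    (v := fun w => KaehlerDifferential.D k (NodalRing k n) (mkR (X w)))).1 ?_
  have htop : ω ∈ Submodule.span (NodalRing k n)
      (Set.range (KaehlerDifferential.D k (NodalRing k n))) := by
    rw [KaehlerDifferential.span_range_derivation]; trivial
  refine Submodule.span_le.2 ?_ htop
  rintro _ ⟨r, rfl⟩
  obtain ⟨f, rfl⟩ := Ideal.Quotient.mk_surjective r
  induction f using MvPolynomial.induction_on with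
  | C a =>
    have : (mkR (C a) : NodalRing k n) = algebraMap k (NodalRing k n) a := rfl
    rw [this, Derivation.map_algebraMap]
    exact Submodule.zero_mem _
  | add p q hp hq =>
    rw [map_add, map_add]
    exact Submodule.add_mem _ hp hq
  | mul_X p v hp =>
    rw [map_mul, Derivation.leibniz]
    refine Submodule.add_mem _ (Submodule.smul_mem _ _ ?_) (Submodule.smul_mem _ _ hp)
    exact Submodule.subset_span ⟨v, rfl⟩

end Aux3

section Aux4

variable (k : Type*) [Field k] (n : ℕ)

local notation "P" => MvPolynomial (Fin n ⊕ Bool) k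
local notation "A" => MvPolynomial (Fin n) k
local notation "Nor" => (Polynomial (MvPolynomial (Fin n) k) × Polynomial (MvPolynomial (Fin n) k))
local notation "mkR" => Ideal.Quotient.mk (Ideal.span {(X (Sum.inr true) * X (Sum.inr false) : MvPolynomial (Fin n ⊕ Bool) k)})
local notation "ψ" => nodalRingToNormalization k n

theorem single_smul' (j : Fin n) (r : NodalRing k n) :
    r • (Pi.single j (1 : NodalRing k n) : Fin n → NodalRing k n) = Pi.single j r := by
  funext i
  by_cases h : i = j
  · subst h; simp
  · simp [Pi.single_apply, h]

theorem L_sum (c : (Fin n ⊕ Bool) → NodalRing k n) :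
    (nodalDer k n).liftKaehlerDifferential
        (∑ w, c w • KaehlerDifferential.D k (NodalRing k n) (mkR (X w)))
      = (((ψ (c (Sum.inr true))).1, (ψ (c (Sum.inr false))).2), fun i => c (Sum.inl i)) := by
  rw [map_sum]
  have hw : ∀ w, (nodalDer k n).liftKaehlerDifferential
        (c w • KaehlerDifferential.D k (NodalRing k n) (mkR (X w)))
      = c w • nodalDer k n (mkR (X w)) := by
    intro w; rw [map_smul, Derivation.liftKaehlerDifferential_comp_D]
  rw [Finset.sum_congr rfl (fun w _ => hw w), Fintype.sum_sum_type]
  have hz : ∀ j : Fin n, c (Sum.inl j) • nodalDer k n (mkR (X (Sum.inl j)))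
      = (((0 : Polynomial A), (0 : Polynomial A)),
          (Pi.single j (c (Sum.inl j)) : Fin n → NodalRing k n)) := by
    intro j
    rw [der_z]
    refine Prod.ext ?_ ?_
    · exact mul_zero _
    · exact single_smul' k n j _
  have hx : c (Sum.inr true) • nodalDer k n (mkR (X (Sum.inr true)))
      = (((ψ (c (Sum.inr true))).1, (0 : Polynomial A)), (0 : Fin n → NodalRing k n)) := by
    rw [der_x]
    refine Prod.ext ?_ ?_
    · show ψ (c (Sum.inr true)) * (((1 : Polynomial A), (0 : Polynomial A)) : Nor) = _
      refine Prod.ext ?_ ?_ <;> simp [Prod.fst_mul, Prod.snd_mul]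
    · exact smul_zero _
  have hy : c (Sum.inr false) • nodalDer k n (mkR (X (Sum.inr false)))
      = (((0 : Polynomial A), (ψ (c (Sum.inr false))).2), (0 : Fin n → NodalRing k n)) := by
    rw [der_y]
    refine Prod.ext ?_ ?_
    · show ψ (c (Sum.inr false)) * (((0 : Polynomial A), (1 : Polynomial A)) : Nor) = _
      refine Prod.ext ?_ ?_ <;> simp [Prod.fst_mul, Prod.snd_mul]
    · exact smul_zero _
  rw [Fintype.sum_bool, hx, hy]
  rw [Finset.sum_congr rfl (fun j _ => hz j), ← prod_mk_sum]
  rw [Finset.univ_sum_single (fun i => c (Sum.inl i))]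
  refine Prod.ext (Prod.ext ?_ ?_) ?_ <;>
    simp [Prod.mk_add_mk, Prod.fst_add, Prod.snd_add]

end Aux4

section Aux5

variable (k : Type*) [Field k] (n : ℕ)

local notation "P" => MvPolynomial (Fin n ⊕ Bool) k
local notation "A" => MvPolynomial (Fin n) k
local notation "Nor" => (Polynomial (MvPolynomial (Fin n) k) × Polynomial (MvPolynomial (Fin n) k))
local notation "mkR" => Ideal.Quotient.mk (Ideal.span {(X (Sum.inr true) * X (Sum.inr false) : MvPolynomial (Fin n ⊕ Bool) k)})
local notation "ψ" => nodalRingToNormalization k n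

local notation "dd" => KaehlerDifferential.D k (NodalRing k n)
local notation "LL" => Derivation.liftKaehlerDifferential (nodalDer k n)
local notation "xx" => (Ideal.Quotient.mk (Ideal.span {(X (Sum.inr true) * X (Sum.inr false) : MvPolynomial (Fin n ⊕ Bool) k)}) (X (Sum.inr true)) : NodalRing k n)
local notation "yy" => (Ideal.Quotient.mk (Ideal.span {(X (Sum.inr true) * X (Sum.inr false) : MvPolynomial (Fin n ⊕ Bool) k)}) (X (Sum.inr false)) : NodalRing k n)

theorem nodal_rel : xx • dd yy + yy • dd xx = 0 := by
  have h1 := (KaehlerDifferential.D k (NodalRing k n)).leibniz xx yy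
  rw [xy_zero k n, map_zero] at h1
  exact h1.symm

theorem nodal_t_torsion :
    xx • dd yy ∈ Submodule.torsion (NodalRing k n) (Ω[NodalRing k n⁄k]) := by
  refine (Submodule.mem_torsion_iff _).2 ⟨⟨xx + yy, xy_nzd k n⟩, ?_⟩
  show (xx + yy) • (xx • dd yy) = 0
  have h2 : xx • (xx • dd yy) = 0 := by
    have h3 : xx • dd yy = -(yy • dd xx) := eq_neg_of_add_eq_zero_left (nodal_rel k n)
    rw [h3, smul_neg xx (yy • dd xx), smul_smul xx yy (dd xx), xy_zero k n,
      zero_smul (NodalRing k n) (dd xx), neg_zero]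
  have h4 : yy • (xx • dd yy) = 0 := by
    rw [smul_smul yy xx (dd yy), mul_comm yy xx, xy_zero k n, zero_smul (NodalRing k n) (dd yy)]
  rw [add_smul xx yy (xx • dd yy), h2, h4, add_zero]

theorem nodal_torsion_le_ker :
    ∀ ω ∈ Submodule.torsion (NodalRing k n) (Ω[NodalRing k n⁄k]), LL ω = 0 := by
  intro ω hω
  obtain ⟨⟨r, hr⟩, hrω⟩ := (Submodule.mem_torsion_iff _).1 hω
  have hm : r • LL ω = 0 := by
    rw [← map_smul]
    rw [show r • ω = (⟨r, hr⟩ : nonZeroDivisors (NodalRing k n)) • ω from rfl, hrω, map_zero]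
  have hψ1 : (ψ r).1 ≠ 0 := by
    intro h0
    obtain ⟨s, hs⟩ := kerX k n r h0
    have hxr : xx * r = 0 := by
      rw [hs, ← mul_assoc, xy_zero k n, zero_mul]
    exact x_ne_zero k n (mem_nonZeroDivisors_iff_right.1 hr _ hxr)
  have hψ2 : (ψ r).2 ≠ 0 := by
    intro h0
    obtain ⟨s, hs⟩ := kerY k n r h0
    have hyr : yy * r = 0 := by
      rw [hs, ← mul_assoc, mul_comm yy xx, xy_zero k n, zero_mul]
    exact y_ne_zero k n (mem_nonZeroDivisors_iff_right.1 hr _ hyr)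
  have e1 : (ψ r).1 * (LL ω).1.1 = 0 := congrArg (fun m => m.1.1) hm
  have e2 : (ψ r).2 * (LL ω).1.2 = 0 := congrArg (fun m => m.1.2) hm
  have e3 : ∀ i, (LL ω).2 i * r = 0 := by
    intro i
    have h5 := congrArg (fun m => m.2 i) hm
    simpa [mul_comm] using h5
  refine Prod.ext (Prod.ext ?_ ?_) (funext fun i => ?_)
  · exact (mul_eq_zero.1 e1).resolve_left hψ1
  · exact (mul_eq_zero.1 e2).resolve_left hψ2
  · exact mem_nonZeroDivisors_iff_right.1 hr _ (e3 i)

theorem nodal_ker_le_span :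
    ∀ ω, LL ω = 0 → ω ∈ Submodule.span (NodalRing k n) {xx • dd yy} := by
  intro ω h
  obtain ⟨c, rfl⟩ := nodal_repr k n ω
  rw [L_sum k n c] at h
  have h1 : (ψ (c (Sum.inr true))).1 = 0 := congrArg (fun m => m.1.1) h
  have h2 : (ψ (c (Sum.inr false))).2 = 0 := congrArg (fun m => m.1.2) h
  have h3 : ∀ i, c (Sum.inl i) = 0 := fun i => congrArg (fun m => m.2 i) h
  obtain ⟨s, hs⟩ := kerX k n _ h1
  obtain ⟨u, hu⟩ := kerY k n _ h2
  rw [Fintype.sum_sum_type, Fintype.sum_bool]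
  have hz0 : (∑ j, c (Sum.inl j) • dd (mkR (X (Sum.inl j)))) = 0 := by
    refine Finset.sum_eq_zero fun j _ => ?_
    rw [h3 j, zero_smul (NodalRing k n) (dd (mkR (X (Sum.inl j))))]
  rw [hz0, zero_add, hs, hu]
  have hyx : yy • dd xx = -(xx • dd yy) := eq_neg_of_add_eq_zero_right (nodal_rel k n)
  have key : (yy * s) • dd xx + (xx * u) • dd yy
      = (u - s) • (xx • dd yy) := by
    rw [mul_comm yy s, mul_comm xx u, ← smul_smul s yy (dd xx), ← smul_smul u xx (dd yy), hyx,
      smul_neg s (xx • dd yy), sub_smul u s (xx • dd yy)]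
    abel
  rw [key]
  exact Submodule.smul_mem _ _ (Submodule.mem_span_singleton_self _)

theorem nodal_surj : Function.Surjective
    (⇑((nodalDer k n).liftKaehlerDifferential) :
      Ω[NodalRing k n⁄k] → ((Polynomial (MvPolynomial (Fin n) k) × Polynomial (MvPolynomial (Fin n) k)) × (Fin n → NodalRing k n))) := by
  intro m
  refine ⟨∑ w, (Sum.elim (fun i => m.2 i)
      (fun b => bif b then mkR (sectX k n m.1.1) else mkR (sectY k n m.1.2)) w)
      • dd (mkR (X w)), ?_⟩
  rw [L_sum k n]
  obtain ⟨⟨p, q⟩, g⟩ := m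
  rw [Prod.mk.injEq, Prod.mk.injEq]
  refine ⟨⟨?_, ?_⟩, rfl⟩
  · show (ψ (mkR (sectX k n p))).1 = p
    rw [psi_mk]
    exact psi_sectX k n _
  · show (ψ (mkR (sectY k n q))).2 = q
    rw [psi_mk]
    exact psi_sectY k n _

theorem nodal_torsion_eq_ker :
    Submodule.torsion (NodalRing k n) (Ω[NodalRing k n⁄k])
      = LinearMap.ker ((nodalDer k n).liftKaehlerDifferential) := by
  refine le_antisymm (fun ω hω => nodal_torsion_le_ker k n ω hω) (fun ω hω => ?_)
  have hsp : Submodule.span (NodalRing k n) {xx • dd yy}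
      ≤ Submodule.torsion (NodalRing k n) (Ω[NodalRing k n⁄k]) :=
    Submodule.span_le.2 (Set.singleton_subset_iff.2 (nodal_t_torsion k n))
  exact hsp (nodal_ker_le_span k n ω hω)

theorem nodal_torsion_eq_span :
    Submodule.torsion (NodalRing k n) (Ω[NodalRing k n⁄k])
      = Submodule.span (NodalRing k n) {xx • dd yy} := by
  refine le_antisymm (fun ω hω => nodal_ker_le_span k n ω (nodal_torsion_le_ker k n ω hω)) ?_
  exact Submodule.span_le.2 (Set.singleton_subset_iff.2 (nodal_t_torsion k n))

noncomputable def nodalEquiv :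
    ((Ω[NodalRing k n⁄k]) ⧸ Submodule.torsion (NodalRing k n) (Ω[NodalRing k n⁄k]))
      ≃ₗ[NodalRing k n]
      ((Polynomial (MvPolynomial (Fin n) k) × Polynomial (MvPolynomial (Fin n) k))
        × (Fin n → NodalRing k n)) :=
  (Submodule.quotEquivOfEq _ _ (nodal_torsion_eq_ker k n)).trans
    (LinearMap.quotKerEquivOfSurjective _ (nodal_surj k n))

end Aux5

/-- For `R = A[x,y]/(xy)` with `A = k[z_1,…,z_n]`:
(1) the torsion submodule of `Ω_{R/k}` is generated by the class of `x dy`; and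
(2) the quotient of `Ω_{R/k}` by its torsion submodule is isomorphic, as an `R`-module,
to `A[x] dx ⊕ A[y] dy ⊕ ⊕_{i=1}^n R dz_i`, where `R` acts on `A[x] dx ⊕ A[y] dy`
through the embedding `R → A[x] × A[y]` into the normalization. -/
theorem nodal_differentials_mod_torsion (k : Type*) [Field k] (n : ℕ) :
    letI : Module (NodalRing k n)
        (Polynomial (MvPolynomial (Fin n) k) × Polynomial (MvPolynomial (Fin n) k)) :=
      Module.compHom _ (nodalRingToNormalization k n).toRingHom
    (Submodule.torsion (NodalRing k n) (Ω[NodalRing k n⁄k])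
        = Submodule.span (NodalRing k n)
            {(Ideal.Quotient.mk _ (X (Sum.inr true)) : NodalRing k n) •
              (KaehlerDifferential.D k (NodalRing k n)
                (Ideal.Quotient.mk _ (X (Sum.inr false))))}) ∧
    Nonempty
      (((Ω[NodalRing k n⁄k]) ⧸ Submodule.torsion (NodalRing k n) (Ω[NodalRing k n⁄k]))
        ≃ₗ[NodalRing k n]
        ((Polynomial (MvPolynomial (Fin n) k) × Polynomial (MvPolynomial (Fin n) k))
          × (Fin n → NodalRing k n))) := by

  exact ⟨nodal_torsion_eq_span k n, ⟨nodalEquiv k n⟩⟩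
end

section
/- Let $X$ be a quasi-projective, equidimensional, demi-normal scheme over an algebraically closed field of characteristic zero, with normalization $\pi\colon\bar X\to X$ and reduced preimage $\bar D$ of the conductor. Then there is an injection of sheaves $\mathcal{T}_X\hookrightarrow\pi_*\mathcal{T}_{\bar X}(-\log\bar D)$, where $\mathcal{T}_X=\mathcal{H}om_X(\Omega_X,\mathcal{O}_X)$ and $\mathcal{T}_{\bar X}(-\log\bar D)=\mathcal{H}om_{\bar X}(\Omega^{[1]}_{\bar X}(\log\bar D),\mathcal{O}_{\bar X})$. -/
set_option linter.unusedSectionVars false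
section Ext
variable {k R K : Type*} [Field k] [CommRing R] [Algebra k R]
  [CommRing K] [Algebra R K] [Algebra k K] [IsScalarTower k R K]
  [IsLocalization (nonZeroDivisors R) K]

namespace SeidenbergAux

lemma cancel (s : nonZeroDivisors R) {x y : K}
    (h : x * algebraMap R K s = y * algebraMap R K s) : x = y :=
  (IsLocalization.map_units K s).mul_right_cancel h

lemma exists_rep (z : K) : ∃ (r : R) (s : nonZeroDivisors R),
    z * algebraMap R K s = algebraMap R K r :=
  ⟨_, _, by rw [mul_comm]; exact (IsLocalization.sec_spec' (nonZeroDivisors R) z).symm⟩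

noncomputable def extFun (δ : Derivation k R R) (z : K) : K :=
  (algebraMap R K (δ (IsLocalization.sec (nonZeroDivisors R) z).1)
    - z * algebraMap R K (δ ((IsLocalization.sec (nonZeroDivisors R) z).2 : R)))
  * (((IsLocalization.map_units K
      (IsLocalization.sec (nonZeroDivisors R) z).2).unit⁻¹ : Kˣ) : K)

lemma extFun_spec (δ : Derivation k R R) (z : K) (r : R) (s : nonZeroDivisors R)
    (h : z * algebraMap R K s = algebraMap R K r) :
    extFun δ z * algebraMap R K s
      = algebraMap R K (δ r) - z * algebraMap R K (δ (s : R)) := by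
  set r₀ := (IsLocalization.sec (nonZeroDivisors R) z).1 with hr₀
  set s₀ := (IsLocalization.sec (nonZeroDivisors R) z).2 with hs₀
  have h₀ : z * algebraMap R K s₀ = algebraMap R K r₀ := by
    rw [mul_comm]; exact (IsLocalization.sec_spec' (nonZeroDivisors R) z).symm
  have hcross : r * s₀ = r₀ * s := by
    apply IsLocalization.injective K (le_refl (nonZeroDivisors R))
    simp only [map_mul]
    rw [← h, ← h₀]; ring
  have hδ : (s₀ : R) * δ r + r * δ (s₀ : R) = (s : R) * δ r₀ + r₀ * δ (s : R) := by
    have := congrArg δ hcross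
    simp only [Derivation.leibniz, smul_eq_mul] at this
    linear_combination this
  have key : (algebraMap R K (δ r₀) - z * algebraMap R K (δ (s₀ : R))) * algebraMap R K s
      = (algebraMap R K (δ r) - z * algebraMap R K (δ (s : R))) * algebraMap R K s₀ := by
    have hδK := congrArg (algebraMap R K) hδ
    simp only [map_add, map_mul] at hδK
    linear_combination (-hδK) - algebraMap R K (δ (s₀ : R)) * h + algebraMap R K (δ (s : R)) * h₀
  have hu : (((IsLocalization.map_units K s₀).unit⁻¹ : Kˣ) : K) * algebraMap R K s₀ = 1 :=
    (IsLocalization.map_units K s₀).val_inv_mul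
  have hext : extFun δ z = (algebraMap R K (δ r₀) - z * algebraMap R K (δ (s₀ : R))) *
      (((IsLocalization.map_units K s₀).unit⁻¹ : Kˣ) : K) := rfl
  apply cancel s₀
  rw [hext]
  linear_combination (algebraMap R K (δ r₀) - z * algebraMap R K (δ (s₀ : R)))
    * algebraMap R K s * hu + key

lemma extFun_add (δ : Derivation k R R) (z₁ z₂ : K) :
    extFun δ (z₁ + z₂) = extFun δ z₁ + extFun δ z₂ := by
    obtain ⟨r₁, s₁, h₁⟩ := exists_rep (R := R) z₁
    obtain ⟨r₂, s₂, h₂⟩ := exists_rep (R := R) z₂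
    have hs : ((s₁ * s₂ : nonZeroDivisors R) : R) = (s₁ : R) * (s₂ : R) := rfl
    have h : (z₁ + z₂) * algebraMap R K ((s₁ * s₂ : nonZeroDivisors R) : R)
        = algebraMap R K (r₁ * (s₂ : R) + r₂ * (s₁ : R)) := by
      simp only [hs, map_add, map_mul]
      linear_combination algebraMap R K (s₂ : R) * h₁ + algebraMap R K (s₁ : R) * h₂
    have e := extFun_spec δ (z₁ + z₂) _ _ h
    have e₁ := extFun_spec δ z₁ r₁ s₁ h₁
    have e₂ := extFun_spec δ z₂ r₂ s₂ h₂
    have eδ : algebraMap R K (δ (r₁ * (s₂ : R) + r₂ * (s₁ : R)))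
        = algebraMap R K (δ r₁) * algebraMap R K (s₂ : R)
          + algebraMap R K r₁ * algebraMap R K (δ (s₂ : R))
          + algebraMap R K (δ r₂) * algebraMap R K (s₁ : R)
          + algebraMap R K r₂ * algebraMap R K (δ (s₁ : R)) := by
      simp only [map_add, Derivation.leibniz, smul_eq_mul, map_mul]; ring
    have eδ' : algebraMap R K (δ ((s₁ * s₂ : nonZeroDivisors R) : R))
        = algebraMap R K (s₁ : R) * algebraMap R K (δ (s₂ : R))
          + algebraMap R K (s₂ : R) * algebraMap R K (δ (s₁ : R)) := by
      rw [hs]; simp only [Derivation.leibniz, smul_eq_mul, map_add, map_mul]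
    apply cancel (s₁ * s₂)
    rw [hs] at e ⊢
    simp only [map_mul] at e ⊢
    linear_combination e + eδ - (z₁ + z₂) * eδ'
      - algebraMap R K (s₂ : R) * e₁ - algebraMap R K (s₁ : R) * e₂
      - algebraMap R K (δ (s₂ : R)) * h₁ - algebraMap R K (δ (s₁ : R)) * h₂
lemma extFun_smul (δ : Derivation k R R) (a : k) (z : K) :
    extFun δ (a • z) = a • extFun δ z := by
    obtain ⟨r₁, s₁, h₁⟩ := exists_rep (R := R) z
    have h : (a • z) * algebraMap R K (s₁ : R) = algebraMap R K (a • r₁) := by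
      rw [Algebra.smul_def, Algebra.smul_def, map_mul,
        IsScalarTower.algebraMap_apply k R K]
      linear_combination algebraMap R K (algebraMap k R a) * h₁
    have e := extFun_spec δ (a • z) _ _ h
    have e₁ := extFun_spec δ z r₁ s₁ h₁
    simp only [Derivation.map_smul] at e
    apply cancel s₁
    rw [e]
    simp only [Algebra.smul_def, map_mul, ← IsScalarTower.algebraMap_apply k R K]
    linear_combination (-(algebraMap k K a)) * e₁
lemma extFun_one (δ : Derivation k R R) : extFun δ (1 : K) = 0 := by
    have h : (1 : K) * algebraMap R K ((1 : nonZeroDivisors R) : R)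
        = algebraMap R K (1 : R) := by simp
    have e := extFun_spec δ 1 1 1 h
    simp only [Derivation.map_one_eq_zero, map_zero, OneMemClass.coe_one, map_one,
      mul_one, one_mul, zero_sub] at e
    simpa using e
lemma extFun_leibniz (δ : Derivation k R R) (z₁ z₂ : K) :
    extFun δ (z₁ * z₂) = z₁ • extFun δ z₂ + z₂ • extFun δ z₁ := by
    obtain ⟨r₁, s₁, h₁⟩ := exists_rep (R := R) z₁
    obtain ⟨r₂, s₂, h₂⟩ := exists_rep (R := R) z₂
    have hs : ((s₁ * s₂ : nonZeroDivisors R) : R) = (s₁ : R) * (s₂ : R) := rfl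
    have h : (z₁ * z₂) * algebraMap R K ((s₁ * s₂ : nonZeroDivisors R) : R)
        = algebraMap R K (r₁ * r₂) := by
      simp only [hs, map_mul]
      calc z₁ * z₂ * (algebraMap R K (s₁ : R) * algebraMap R K (s₂ : R))
          = (z₁ * algebraMap R K (s₁ : R)) * (z₂ * algebraMap R K (s₂ : R)) := by ring
        _ = algebraMap R K r₁ * algebraMap R K r₂ := by rw [h₁, h₂]
    have e := extFun_spec δ (z₁ * z₂) _ _ h
    have e₁ := extFun_spec δ z₁ r₁ s₁ h₁
    have e₂ := extFun_spec δ z₂ r₂ s₂ h₂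
    have eδ : algebraMap R K (δ (r₁ * r₂))
        = algebraMap R K (δ r₁) * algebraMap R K r₂
          + algebraMap R K r₁ * algebraMap R K (δ r₂) := by
      simp only [Derivation.leibniz, smul_eq_mul, map_add, map_mul]; ring
    have eδ' : algebraMap R K (δ ((s₁ * s₂ : nonZeroDivisors R) : R))
        = algebraMap R K (s₁ : R) * algebraMap R K (δ (s₂ : R))
          + algebraMap R K (s₂ : R) * algebraMap R K (δ (s₁ : R)) := by
      rw [hs]; simp only [Derivation.leibniz, smul_eq_mul, map_add, map_mul]
    apply cancel (s₁ * s₂)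
    rw [hs] at e ⊢
    simp only [map_mul, smul_eq_mul] at e ⊢
    linear_combination e + eδ - z₁ * z₂ * eδ'
      - z₁ * algebraMap R K (s₁ : R) * e₂ - z₂ * algebraMap R K (s₂ : R) * e₁
      - algebraMap R K (δ r₁) * h₂ - algebraMap R K (δ r₂) * h₁

/-- The extension of a derivation to the localization at nonzerodivisors. -/
noncomputable def locDer (δ : Derivation k R R) : Derivation k K K where
  toFun := extFun δ
  map_add' := extFun_add δ
  map_smul' := extFun_smul δ
  map_one_eq_zero' := extFun_one δ
  leibniz' := extFun_leibniz δ

lemma locDer_algebraMap (δ : Derivation k R R) (r : R) :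
    locDer (K := K) δ (algebraMap R K r) = algebraMap R K (δ r) := by
  have h : (algebraMap R K r) * algebraMap R K ((1 : nonZeroDivisors R) : R)
      = algebraMap R K r := by simp
  have e := extFun_spec δ (algebraMap R K r) r 1 h
  simp only [OneMemClass.coe_one, Derivation.map_one_eq_zero, map_zero, mul_zero, map_one,
    mul_one, sub_zero] at e
  exact e

end SeidenbergAux
end Ext

section Taylor
variable {k K : Type*} [Field k] [CharZero k] [CommRing K] [Algebra k K]

namespace SeidenbergAux

lemma iterate_deriv_mul (D : Derivation k K K) (a b : K) (n : ℕ) :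
    D^[n] (a * b) = ∑ i ∈ Finset.range (n + 1), n.choose i • (D^[i] a * D^[n - i] b) := by
  induction n with
  | zero => simp
  | succ n ih =>
    rw [Function.iterate_succ_apply', ih, map_sum]
    have step : ∀ i ∈ Finset.range (n + 1),
        D (n.choose i • (D^[i] a * D^[n - i] b))
        = n.choose i • (D^[i + 1] a * D^[n + 1 - (i + 1)] b)
          + n.choose i • (D^[i] a * D^[n + 1 - i] b) := by
      intro i hi
      have hi' : i ≤ n := Nat.lt_succ_iff.mp (Finset.mem_range.mp hi)
      have h1 : n + 1 - (i + 1) = n - i := by omega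
      have h2 : n + 1 - i = (n - i) + 1 := by omega
      rw [map_nsmul, Derivation.leibniz, smul_eq_mul, smul_eq_mul, h1, h2,
        Function.iterate_succ_apply' D i a, Function.iterate_succ_apply' D (n - i) b,
        smul_add]
      ring_nf
    rw [Finset.sum_congr rfl step, Finset.sum_add_distrib]
    -- target: reorganize with Pascal
    have lhs1 : ∑ i ∈ Finset.range (n + 1), n.choose i • (D^[i + 1] a * D^[n + 1 - (i + 1)] b)
        = ∑ i ∈ Finset.range (n + 2), (if h : i = 0 then 0 else n.choose (i - 1)) •
            (D^[i] a * D^[n + 1 - i] b) := by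
      rw [Finset.sum_range_succ' (fun i => (if h : i = 0 then 0 else n.choose (i - 1)) •
            (D^[i] a * D^[n + 1 - i] b)) (n + 1)]
      simp
    have lhs2 : ∑ i ∈ Finset.range (n + 1), n.choose i • (D^[i] a * D^[n + 1 - i] b)
        = ∑ i ∈ Finset.range (n + 2), n.choose i • (D^[i] a * D^[n + 1 - i] b) := by
      rw [Finset.sum_range_succ _ (n + 1)]
      simp [Nat.choose_succ_self]
    rw [lhs1, lhs2, ← Finset.sum_add_distrib]
    refine Finset.sum_congr rfl fun i _ => ?_
    rcases Nat.eq_zero_or_pos i with h0 | hpos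
    · subst h0; simp
    · obtain ⟨j, rfl⟩ := Nat.exists_eq_succ_of_ne_zero (Nat.pos_iff_ne_zero.mp hpos)
      simp [Nat.succ_sub_one, Nat.choose_succ_succ]
      ring
noncomputable def taylor (D : Derivation k K K) (a : K) : PowerSeries K :=
  PowerSeries.mk fun n => ((n.factorial : k)⁻¹) • D^[n] a

lemma taylor_coeff (D : Derivation k K K) (a : K) (n : ℕ) :
    PowerSeries.coeff n (taylor D a) = ((n.factorial : k)⁻¹) • D^[n] a :=
  PowerSeries.coeff_mk _ _

lemma taylor_coeff_zero (D : Derivation k K K) (a : K) :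
    PowerSeries.coeff 0 (taylor D a) = a := by
  simp [taylor_coeff]

lemma taylor_coeff_one (D : Derivation k K K) (a : K) :
    PowerSeries.coeff 1 (taylor D a) = D a := by
  simp [taylor_coeff]

lemma taylor_mul (D : Derivation k K K) (a b : K) :
    taylor D (a * b) = taylor D a * taylor D b := by
  ext n
  rw [PowerSeries.coeff_mul, taylor_coeff, iterate_deriv_mul,
    Finset.Nat.sum_antidiagonal_eq_sum_range_succ_mk, Finset.smul_sum]
  refine Finset.sum_congr rfl fun i hi => ?_
  have hi' : i ≤ n := Nat.lt_succ_iff.mp (Finset.mem_range.mp hi)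
  rw [taylor_coeff, taylor_coeff, smul_mul_smul_comm, ← Nat.cast_smul_eq_nsmul k, smul_smul]
  congr 1
  have hfac : ((n.factorial : k)) ≠ 0 := Nat.cast_ne_zero.mpr (Nat.factorial_ne_zero n)
  have h1 : ((i.factorial : k)) ≠ 0 := Nat.cast_ne_zero.mpr (Nat.factorial_ne_zero i)
  have h2 : (((n - i).factorial : k)) ≠ 0 := Nat.cast_ne_zero.mpr (Nat.factorial_ne_zero (n - i))
  have key : (n.choose i : k) * (i.factorial : k) * ((n - i).factorial : k)
      = (n.factorial : k) := by
    exact_mod_cast congrArg (Nat.cast : ℕ → k) (Nat.choose_mul_factorial_mul_factorial hi')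
  field_simp
  linear_combination key

lemma taylor_pow_mul (D : Derivation k K K) (c x : K) (n : ℕ) :
    taylor D (c * x ^ n) = taylor D c * (taylor D x) ^ n := by
  induction n with
  | zero => simp
  | succ n ih =>
    rw [pow_succ, ← mul_assoc, taylor_mul, ih, pow_succ, mul_assoc]

end SeidenbergAux
end Taylor

namespace SeidenbergAux
section Core
variable {k R K : Type*} [Field k] [CharZero k] [CommRing R] [Algebra k R]
  [CommRing K] [Algebra R K] [Algebra k K] [IsScalarTower k R K]
  [IsLocalization (nonZeroDivisors R) K] [IsNoetherianRing R]



lemma range_smul_mem (r : R) {z : K} (hz : z ∈ (algebraMap R K).range) :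
    r • z ∈ (algebraMap R K).range := by
  obtain ⟨r', rfl⟩ := hz
  exact ⟨r * r', by rw [map_mul, Algebra.smul_def]⟩

lemma range_ksmul_mem (a : k) {z : K} (hz : z ∈ (algebraMap R K).range) :
    a • z ∈ (algebraMap R K).range := by
  obtain ⟨r', rfl⟩ := hz
  refine ⟨a • r', ?_⟩
  rw [Algebra.smul_def, Algebra.smul_def, map_mul, ← IsScalarTower.algebraMap_apply k R K]

/-- The subring of power series all of whose coefficients are in the image of `R`. -/
def coeffRange : Subring (PowerSeries K) where
  carrier := {f | ∀ j, PowerSeries.coeff j f ∈ (algebraMap R K).range}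
  zero_mem' := fun j => by simp only [map_zero]; exact zero_mem _
  one_mem' := fun j => by
    rw [PowerSeries.coeff_one]
    split <;> [exact one_mem _; exact zero_mem _]
  add_mem' := fun hf hg j => by rw [map_add]; exact add_mem (hf j) (hg j)
  neg_mem' := fun hf j => by rw [map_neg]; exact neg_mem (hf j)
  mul_mem' := fun {f g} hf hg j => by
    rw [PowerSeries.coeff_mul]
    exact Subring.sum_mem _ fun p hp => mul_mem (hf p.1) (hg p.2)

lemma C_mem_coeffRange {z : K} (hz : z ∈ (algebraMap R K).range) :
    (PowerSeries.C z) ∈ coeffRange (R := R) := by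
  intro j
  rw [PowerSeries.coeff_C]
  split <;> [exact hz; exact zero_mem _]

end Core
end SeidenbergAux

section Main
variable {k R K : Type*} [Field k] [CharZero k] [CommRing R] [Algebra k R]
  [CommRing K] [Algebra R K] [Algebra k K] [IsScalarTower k R K]
  [IsLocalization (nonZeroDivisors R) K] [IsNoetherianRing R]

namespace SeidenbergAux

lemma taylor_mem_coeffRange (D : Derivation k K K)
    (hD : ∀ z ∈ (algebraMap R K).range, D z ∈ (algebraMap R K).range)
    {z : K} (hz : z ∈ (algebraMap R K).range) :
    taylor D z ∈ coeffRange (R := R) := by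
  intro j
  rw [taylor_coeff]
  apply range_ksmul_mem
  induction j with
  | zero => simpa using hz
  | succ n ih =>
    rw [Function.iterate_succ_apply']
    exact hD _ ih

/-- Seidenberg's theorem (elementary form): the canonical extension of a derivation to
the total quotient ring maps integral elements to integral elements. -/
theorem locDer_isIntegral (δ : Derivation k R R) (x : K) (hx : IsIntegral R x) :
    IsIntegral R (locDer (K := K) δ x) := by
  set D := locDer (K := K) δ with hDdef
  have hD : ∀ z ∈ (algebraMap R K).range, D z ∈ (algebraMap R K).range := by
    rintro z ⟨r, rfl⟩
    exact ⟨δ r, (locDer_algebraMap δ r).symm⟩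
  -- a common denominator for the powers of x
  obtain ⟨T, hT⟩ := hx.fg_adjoin_singleton
  obtain ⟨c, hc⟩ := IsLocalization.exist_integer_multiples_of_finset (nonZeroDivisors R) T
  have hspan : ∀ y ∈ Submodule.span R (T : Set K), (c : R) • y ∈ (algebraMap R K).range := by
    intro y hy
    induction hy using Submodule.span_induction with
    | mem a ha => obtain ⟨r, hr⟩ := hc a ha; exact ⟨r, hr⟩
    | zero => rw [smul_zero]; exact zero_mem _
    | add u v _ _ hu hv => rw [smul_add]; exact add_mem hu hv
    | smul r u _ hu => rw [smul_comm]; exact range_smul_mem r hu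
  have hpow : ∀ n : ℕ, algebraMap R K (c : R) * x ^ n ∈ (algebraMap R K).range := by
    intro n
    rw [← Algebra.smul_def]
    refine hspan _ ?_
    rw [hT]
    exact (Subalgebra.mem_toSubmodule _).mpr
      (pow_mem (Algebra.self_mem_adjoin_singleton R x) n)
  set cK := algebraMap R K (c : R) with hcK
  have hcRange : cK ∈ (algebraMap R K).range := ⟨c, rfl⟩
  -- key: c² (D x)^n lies in the image of R for every n
  have key : ∀ n : ℕ, cK * cK * (D x) ^ n ∈ (algebraMap R K).range := by
    intro n
    -- the auxiliary power series
    set E := PowerSeries.C cK * taylor D cK * (taylor D x - PowerSeries.C x) ^ n with hE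
    -- all coefficients of E lie in the image of R
    have hEmem : E ∈ coeffRange (R := R) := by
      have expand : E = ∑ i ∈ Finset.range (n + 1),
          taylor D (cK * x ^ i) * ((PowerSeries.C (cK * x ^ (n - i)))
            * (-1) ^ (n - i) * (n.choose i : PowerSeries K)) := by
        rw [hE, sub_eq_add_neg, add_pow, Finset.mul_sum]
        refine Finset.sum_congr rfl fun i hi => ?_
        rw [taylor_pow_mul, neg_pow, map_mul, map_pow]
        ring
      rw [expand]
      refine Subring.sum_mem _ fun i hi => ?_
      refine mul_mem (taylor_mem_coeffRange D hD (hpow i)) ?_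
      refine mul_mem (mul_mem (C_mem_coeffRange (hpow (n - i))) ?_) ?_
      · exact pow_mem (neg_mem (one_mem _)) _
      · exact natCast_mem _ _
    -- extract the n-th coefficient of E
    have h0 : PowerSeries.constantCoeff (taylor D x - PowerSeries.C x) = 0 := by
      rw [map_sub, PowerSeries.constantCoeff_C, ← PowerSeries.coeff_zero_eq_constantCoeff_apply,
        taylor_coeff_zero, sub_self]
    obtain ⟨y, hy⟩ := PowerSeries.X_dvd_iff.mpr h0
    have hy0 : PowerSeries.constantCoeff y = D x := by
      have h1 := congrArg (PowerSeries.coeff 1) hy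
      have h2 : PowerSeries.coeff 1 (PowerSeries.X * y) = PowerSeries.coeff 0 y := by
        simpa using PowerSeries.coeff_succ_X_mul 0 y
      rw [map_sub, taylor_coeff_one, h2, PowerSeries.coeff_zero_eq_constantCoeff_apply] at h1
      simp only [PowerSeries.coeff_C, one_ne_zero, if_false, sub_zero] at h1
      exact h1.symm
    have hEn : PowerSeries.coeff n E = cK * cK * (D x) ^ n := by
      rw [hE, hy, mul_pow, mul_comm (PowerSeries.X ^ n) (y ^ n), ← mul_assoc]
      have : PowerSeries.C cK * taylor D cK * y ^ n * PowerSeries.X ^ n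
          = PowerSeries.X ^ n * (PowerSeries.C cK * taylor D cK * y ^ n) := by ring
      rw [this]
      have hcoeff := PowerSeries.coeff_X_pow_mul
        (PowerSeries.C cK * taylor D cK * y ^ n) n 0
      rw [zero_add] at hcoeff
      rw [hcoeff, PowerSeries.coeff_zero_eq_constantCoeff_apply, map_mul, map_mul, map_pow,
        PowerSeries.constantCoeff_C, hy0, ← PowerSeries.coeff_zero_eq_constantCoeff_apply,
        taylor_coeff_zero]
    rw [← hEn]
    exact hEmem n
  -- the determinant trick
  have c2mem : ((c : R) * (c : R)) ∈ nonZeroDivisors R := mul_mem c.2 c.2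
  have HH : ∀ z ∈ Algebra.adjoin R {D x},
      ∃ r : R, algebraMap R K r = algebraMap R K ((c : R) * (c : R)) * z := by
    intro z hz
    rw [Algebra.adjoin_singleton_eq_range_aeval] at hz
    obtain ⟨p, rfl⟩ := hz
    have haev : (Polynomial.aeval (D x)).toRingHom p = Polynomial.aeval (D x) p := rfl
    rw [haev, Polynomial.aeval_eq_sum_range]
    rw [Finset.mul_sum]
    have : ∀ i ∈ Finset.range (p.natDegree + 1),
        algebraMap R K ((c : R) * (c : R)) * (p.coeff i • (D x) ^ i)
          ∈ (algebraMap R K).range := by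
      intro i _
      have : algebraMap R K ((c : R) * (c : R)) * (p.coeff i • (D x) ^ i)
          = p.coeff i • (cK * cK * (D x) ^ i) := by
        rw [Algebra.smul_def, Algebra.smul_def, map_mul, hcK]; ring
      rw [this]
      exact range_smul_mem _ (key i)
    have := Subring.sum_mem ((algebraMap R K).range) (fun i hi =>
      (fun i hi => this i hi) i hi)
    obtain ⟨r, hr⟩ := this
    exact ⟨r, hr⟩
  -- build an injective linear map from the adjoin-submodule into R
  set N := Subalgebra.toSubmodule (Algebra.adjoin R {D x}) with hN
  have HH' : ∀ z : N, ∃ r : R, algebraMap R K r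
      = algebraMap R K ((c : R) * (c : R)) * (z : K) :=
    fun z => HH _ ((Subalgebra.mem_toSubmodule _).mp z.2)
  choose f hf using HH'
  have hinjR : Function.Injective (algebraMap R K) :=
    IsLocalization.injective K (le_refl (nonZeroDivisors R))
  have c2unit : IsUnit (algebraMap R K ((c : R) * (c : R))) :=
    IsLocalization.map_units K ⟨_, c2mem⟩
  have hfadd : ∀ z w : N, f (z + w) = f z + f w := by
    intro z w
    apply hinjR
    rw [map_add, hf, hf, hf, Submodule.coe_add, mul_add]
  have hfsmul : ∀ (r : R) (z : N), f (r • z) = r • f z := by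
    intro r z
    apply hinjR
    rw [hf, SetLike.val_smul, Algebra.smul_def, smul_eq_mul,
      map_mul (algebraMap R K) r (f z), hf]
    ring
  let ℓ : N →ₗ[R] R := { toFun := f, map_add' := hfadd, map_smul' := hfsmul }
  have hℓinj : Function.Injective ℓ := by
    intro z w h
    have : algebraMap R K ((c : R) * (c : R)) * (z : K)
        = algebraMap R K ((c : R) * (c : R)) * (w : K) := by
      rw [← hf, ← hf]; exact congrArg (algebraMap R K) h
    have := c2unit.mul_left_cancel this
    exact Subtype.ext this
  have : IsNoetherian R N := isNoetherian_of_injective ℓ hℓinj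
  have hfg : N.FG := (Submodule.fg_top N).mp (IsNoetherian.noetherian ⊤)
  exact IsIntegral.of_mem_of_fg _ hfg _ (Algebra.self_mem_adjoin_singleton R (D x))

end SeidenbergAux
end Main

section Ritt
variable {k S : Type*} [Field k] [CharZero k] [CommRing S] [Algebra k S]

namespace SeidenbergAux

omit [Field k] [CharZero k] [Algebra k S] in
lemma nat_div_mem (k : Type*) [Field k] [CharZero k] [Algebra k S] (I : Ideal S) (m : ℕ) (hm : 0 < m) {y : S}
    (hy : (m : S) * y ∈ I) : y ∈ I := by
  have hmk : ((m : k)) ≠ 0 := Nat.cast_ne_zero.mpr hm.ne'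
  have h1 : algebraMap k S ((m : k)⁻¹) * (m : S) = 1 := by
    rw [← map_natCast (algebraMap k S) m, ← map_mul, inv_mul_cancel₀ hmk, map_one]
  have : y = algebraMap k S ((m : k)⁻¹) * ((m : S) * y) := by
    rw [← mul_assoc, h1, one_mul]
  rw [this]
  exact Ideal.mul_mem_left _ _ hy

lemma ritt (D : Derivation k S S) (I : Ideal S) (hI : ∀ y ∈ I, D y ∈ I)
    {a : S} {n : ℕ} (hn : 0 < n) (ha : a ^ n ∈ I) : D a ^ (2 * n - 1) ∈ I := by
  have main : ∀ p : ℕ, p < n → a ^ (n - 1 - p) * D a ^ (2 * p + 1) ∈ I := by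
    intro p
    induction p with
    | zero =>
      intro _
      have h1 : D (a ^ n) ∈ I := hI _ ha
      rw [Derivation.leibniz_pow, nsmul_eq_mul, smul_eq_mul] at h1
      have := nat_div_mem k I n hn h1
      simpa using this
    | succ p ih =>
      intro hp
      have hp' : p < n := Nat.lt_of_succ_lt hp
      have hd := ih hp'
      have hDd := hI _ hd
      set M := n - 1 - (p + 1) with hM
      have hMs : n - 1 - p = M + 1 := by omega
      rw [hMs] at hd hDd
      have hiden : ((M + 1 : ℕ) : S) * (a ^ M * D a ^ (2 * (p + 1) + 1))
          = D a * D (a ^ (M + 1) * D a ^ (2 * p + 1))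
            - ((2 * p + 1 : ℕ) : S) * D (D a) * (a ^ (M + 1) * D a ^ (2 * p + 1)) := by
        rw [Derivation.leibniz, Derivation.leibniz_pow, Derivation.leibniz_pow]
        simp only [smul_eq_mul, nsmul_eq_mul, Nat.add_sub_cancel]
        push_cast
        ring
      have hmem : ((M + 1 : ℕ) : S) * (a ^ M * D a ^ (2 * (p + 1) + 1)) ∈ I := by
        rw [hiden]
        exact Ideal.sub_mem _ (Ideal.mul_mem_left _ _ hDd) (Ideal.mul_mem_left _ _ hd)
      exact nat_div_mem k I (M + 1) (Nat.succ_pos M) hmem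
  have hfin := main (n - 1) (by omega)
  have e1 : n - 1 - (n - 1) = 0 := by omega
  have e2 : 2 * (n - 1) + 1 = 2 * n - 1 := by omega
  rw [e1, pow_zero, one_mul, e2] at hfin
  exact hfin

end SeidenbergAux
end Ritt

/-- Affine-local form of: for a quasi-projective, equidimensional, demi-normal scheme
`X` over an algebraically closed field `k` of characteristic zero, with normalization
`π : X̄ → X` and `D̄` the reduced preimage of the conductor, there is an injection
`𝒯_X ↪ π_* 𝒯_{X̄}(-log D̄)`.

Here `R` is the (reduced, noetherian, finite-type) coordinate ring of `X`, `K` its total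
quotient ring, `S = integralClosure R K` the normalization, and `C` the conductor.
A tangent vector field on `X` is a `k`-derivation `δ : R → R`; the statement is that it
extends (necessarily uniquely, whence the injectivity) to a derivation `δ'` of the
normalization `S` which moreover preserves the radical of the conductor — i.e. `δ'` is a
logarithmic vector field along `D̄`, a section of `π_* 𝒯_{X̄}(-log D̄)`. -/
theorem tangent_field_lifts_to_log_tangent_of_normalization
    (k R K : Type*) [Field k] [CharZero k] [IsAlgClosed k]
    [CommRing R] [Algebra k R] [IsReduced R] [IsNoetherianRing R]
    [Algebra.FiniteType k R]
    [CommRing K] [Algebra R K] [IsLocalization (nonZeroDivisors R) K]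
    [Algebra k K] [IsScalarTower k R K]
    (δ : Derivation k R R) :
    ∃ δ' : Derivation k (integralClosure R K) (integralClosure R K),
      (∀ r : R, (δ' (algebraMap R (integralClosure R K) r) : K)
          = algebraMap R K (δ r)) ∧
      (∀ a : integralClosure R K,
        (∃ m : ℕ, 0 < m ∧ ∀ b : integralClosure R K,
            ∃ r : R, algebraMap R K r = (a : K) ^ m * b) →
        (∃ m : ℕ, 0 < m ∧ ∀ b : integralClosure R K,
            ∃ r : R, algebraMap R K r = (δ' a : K) ^ m * b)) := by
  classical
  set D := SeidenbergAux.locDer (K := K) δ with hDdef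
  have hstab : ∀ z : integralClosure R K, D (z : K) ∈ integralClosure R K :=
    fun z => SeidenbergAux.locDer_isIntegral δ _ z.2
  let δ' : Derivation k (integralClosure R K) (integralClosure R K) :=
    { toFun := fun z => ⟨D (z : K), hstab z⟩
      map_add' := fun z w => Subtype.ext (by
        show D ((z + w : integralClosure R K) : K) = D (z : K) + D (w : K)
        rw [show ((z + w : integralClosure R K) : K) = (z : K) + (w : K) from rfl, map_add])
      map_smul' := fun a z => Subtype.ext (by
        show D ((a • z : integralClosure R K) : K) = a • D (z : K)
        rw [show ((a • z : integralClosure R K) : K) = a • (z : K) from rfl, Derivation.map_smul])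
      map_one_eq_zero' := Subtype.ext (by
        show D ((1 : integralClosure R K) : K) = (0 : K)
        rw [show ((1 : integralClosure R K) : K) = (1 : K) from rfl,
          Derivation.map_one_eq_zero])
      leibniz' := fun z w => Subtype.ext (by
        show D ((z * w : integralClosure R K) : K)
          = ((z • ⟨D (w : K), hstab w⟩ + w • ⟨D (z : K), hstab z⟩ :
              integralClosure R K) : K)
        rw [show ((z * w : integralClosure R K) : K) = (z : K) * (w : K) from rfl,
          Derivation.leibniz]
        rfl) }
  have hbase : ∀ r : R, (δ' (algebraMap R (integralClosure R K) r) : K)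
      = algebraMap R K (δ r) := by
    intro r
    show D ((algebraMap R (integralClosure R K) r : integralClosure R K) : K) = _
    rw [show ((algebraMap R (integralClosure R K) r : integralClosure R K) : K)
        = algebraMap R K r from rfl]
    exact SeidenbergAux.locDer_algebraMap δ r
  refine ⟨δ', hbase, ?_⟩
  rintro a ⟨m, hm, hmem⟩
  -- the conductor-type ideal
  let I : Ideal (integralClosure R K) :=
    { carrier := {s : integralClosure R K |
        ∀ b : integralClosure R K, ∃ r : R, algebraMap R K r = (s : K) * b}
      add_mem' := by
        rintro s t hs ht b
        obtain ⟨r₁, hr₁⟩ := hs b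
        obtain ⟨r₂, hr₂⟩ := ht b
        exact ⟨r₁ + r₂, by
          rw [map_add, hr₁, hr₂, show ((s + t : integralClosure R K) : K)
            = (s : K) + (t : K) from rfl]; ring⟩
      zero_mem' := fun b => ⟨0, by simp⟩
      smul_mem' := by
        rintro c s hs b
        obtain ⟨r, hr⟩ := hs (c * b)
        refine ⟨r, ?_⟩
        rw [hr, smul_eq_mul, show ((c * s : integralClosure R K) : K)
          = (c : K) * (s : K) from rfl, show ((c * b : integralClosure R K) : K)
          = (c : K) * (b : K) from rfl]
        ring }
  have hI : ∀ s ∈ I, δ' s ∈ I := by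
    intro s hs b
    obtain ⟨r₀, hr₀⟩ := hs b
    obtain ⟨r₁, hr₁⟩ := hs (δ' b)
    have hsb : s * b = algebraMap R (integralClosure R K) r₀ :=
      Subtype.ext (by
        rw [show ((algebraMap R (integralClosure R K) r₀ : integralClosure R K) : K)
          = algebraMap R K r₀ from rfl,
          show ((s * b : integralClosure R K) : K) = (s : K) * (b : K) from rfl, hr₀])
    have h2 : (δ' (s * b) : K) = algebraMap R K (δ r₀) := by rw [hsb]; exact hbase r₀
    have h3 : (δ' (s * b) : K) = (s : K) * (δ' b : K) + (b : K) * (δ' s : K) := by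
      rw [Derivation.leibniz]
      rw [show ((s • δ' b + b • δ' s : integralClosure R K) : K)
        = (s : K) * (δ' b : K) + (b : K) * (δ' s : K) from rfl]
    refine ⟨δ r₀ - r₁, ?_⟩
    rw [map_sub, hr₁]
    rw [← h2, h3]
    ring
  have haI : a ^ m ∈ I := by
    intro b
    obtain ⟨r, hr⟩ := hmem b
    refine ⟨r, ?_⟩
    rw [hr]
    congr 1
  have hritt := SeidenbergAux.ritt δ' I hI hm haI
  refine ⟨2 * m - 1, by omega, ?_⟩
  intro b
  obtain ⟨r, hr⟩ := hritt b
  refine ⟨r, ?_⟩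
  rw [hr]
  congr 1
end
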